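/- Let α, β, γ, c be real numbers with α > 0, γ ≠ 0, β + c > 0, and take A = 0 in the system (★). If (φ, ψ) : ℝ → ℝ² is a nonconstant solution of (★) with lim_{y→±∞} φ(y) = 0 and lim_{y→±∞} ψ(y) = 0, then there exists a unique y₀ ∈ ℝ such that φ(y₀) = −3(β+c)/γ and ψ(y₀) = 0. -/

import Mathlib

open Filter Metric Set

/-- For the system (★) with `A = 0` (`φ' = ψ`,
`ψ' = ((β+c)φ + (γ/2)φ²)/α`), any nonconstant solution with `φ, ψ → 0` at `±∞`
admits a unique `y₀ ∈ ℝ` with `φ(y₀) = −3(β+c)/γ` and `ψ(y₀) = 0`. -/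
theorem stmt_8 (α β γ c : ℝ) (hα : 0 < α) (hγ : γ ≠ 0) (hβc : 0 < β + c)
    (φ ψ : ℝ → ℝ)
    (hφ : ∀ y : ℝ, HasDerivAt φ (ψ y) y)
    (hψ : ∀ y : ℝ, HasDerivAt ψ (((β + c) * φ y + γ / 2 * (φ y) ^ 2) / α) y)
    (hnc : ¬ ∀ y z : ℝ, (φ y, ψ y) = (φ z, ψ z))
    (hφtop : Filter.Tendsto φ Filter.atTop (nhds 0))
    (hφbot : Filter.Tendsto φ Filter.atBot (nhds 0))
    (hψtop : Filter.Tendsto ψ Filter.atTop (nhds 0))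
    (hψbot : Filter.Tendsto ψ Filter.atBot (nhds 0)) :
    ∃! y₀ : ℝ, φ y₀ = -3 * (β + c) / γ ∧ ψ y₀ = 0 := by
  have hφc : Continuous φ := continuous_iff_continuousAt.2 fun y => (hφ y).continuousAt
  have hψc : Continuous ψ := continuous_iff_continuousAt.2 fun y => (hψ y).continuousAt
  have hm0 : -3 * (β + c) / γ ≠ 0 := div_ne_zero (by nlinarith) hγ
  -- cocompact limits
  have hcoφ : Tendsto φ (cocompact ℝ) (nhds 0) := by
    rw [cocompact_eq_atBot_atTop]; exact tendsto_sup.2 ⟨hφbot, hφtop⟩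
  have hcoψ : Tendsto ψ (cocompact ℝ) (nhds 0) := by
    rw [cocompact_eq_atBot_atTop]; exact tendsto_sup.2 ⟨hψbot, hψtop⟩
  -- energy identity
  have energy : ∀ y, α * ψ y ^ 2 = (β + c) * φ y ^ 2 + γ / 3 * φ y ^ 3 := by
    set E : ℝ → ℝ := fun y => α * ψ y ^ 2 / 2 - (β + c) * φ y ^ 2 / 2 - γ / 6 * φ y ^ 3
      with hEdef
    have hE : ∀ y, HasDerivAt E 0 y := by
      intro y
      have h1 := (((hψ y).pow 2).const_mul α).div_const 2
      have h2 := (((hφ y).pow 2).const_mul (β + c)).div_const 2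
      have h3 := ((hφ y).pow 3).const_mul (γ / 6)
      have := (h1.sub h2).sub h3
      refine this.congr_deriv ?_
      field_simp
      ring
    have hconst : ∀ y, E y = E 0 := fun y =>
      is_const_of_deriv_eq_zero (fun x => (hE x).differentiableAt)
        (fun x => (hE x).deriv) y 0
    have hlim : Tendsto E atTop (nhds 0) := by
      have : Tendsto E atTop
          (nhds (α * (0:ℝ) ^ 2 / 2 - (β + c) * (0:ℝ) ^ 2 / 2 - γ / 6 * (0:ℝ) ^ 3)) := by
        exact ((((hψtop.pow 2).const_mul α).div_const 2).sub
          (((hφtop.pow 2).const_mul (β + c)).div_const 2)).sub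
          ((hφtop.pow 3).const_mul (γ / 6))
      simpa using this
    have hE0 : E 0 = 0 := by
      have h2 : Tendsto E atTop (nhds (E 0)) := by
        have : E = fun _ => E 0 := funext hconst
        rw [this]; exact tendsto_const_nhds
      exact tendsto_nhds_unique h2 hlim
    intro y
    have := hconst y
    rw [hE0] at this
    have : α * ψ y ^ 2 / 2 - (β + c) * φ y ^ 2 / 2 - γ / 6 * φ y ^ 3 = 0 := this
    nlinarith [this]
  -- existence
  have hex : ∃ y₀, φ y₀ = -3 * (β + c) / γ ∧ ψ y₀ = 0 := by
    -- φ is not identically zero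
    have ha : ∃ a, φ a ≠ 0 := by
      by_contra h
      push_neg at h
      apply hnc
      intro y z
      have hψ0 : ∀ y, ψ y = 0 := by
        intro y
        have h0 : HasDerivAt φ 0 y := by
          have : φ = fun _ => (0:ℝ) := funext h
          rw [this]; exact hasDerivAt_const y 0
        exact (hφ y).unique h0
      simp [h, hψ0]
    obtain ⟨a, ha⟩ := ha
    have key : ∀ y₀, ψ y₀ = 0 → φ y₀ ≠ 0 → φ y₀ = -3 * (β + c) / γ := by
      intro y₀ hψ0 hφ0
      have h1 := energy y₀
      rw [hψ0] at h1
      have h2 : φ y₀ ^ 2 * ((β + c) + γ / 3 * φ y₀) = 0 := by nlinarith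
      have h3 : (β + c) + γ / 3 * φ y₀ = 0 := by
        rcases mul_eq_zero.1 h2 with h | h
        · exact absurd (pow_eq_zero_iff (by norm_num)|>.1 h) hφ0
        · exact h
      field_simp
      linarith
    rcases ha.lt_or_gt with hneg | hpos
    · have hev : ∀ᶠ x in cocompact ℝ, φ a ≤ φ x :=
        (hcoφ.eventually (eventually_gt_nhds hneg)).mono fun x hx => hx.le
      obtain ⟨y₀, hy₀⟩ := hφc.exists_forall_le' a hev
      have hmin : IsLocalMin φ y₀ := Filter.Eventually.of_forall hy₀
      have hψ0 : ψ y₀ = 0 := hmin.hasDerivAt_eq_zero (hφ y₀)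
      exact ⟨y₀, key y₀ hψ0 (by have := hy₀ a; intro h; rw [h] at this; linarith), hψ0⟩
    · have hev : ∀ᶠ x in cocompact ℝ, φ x ≤ φ a :=
        (hcoφ.eventually (eventually_lt_nhds hpos)).mono fun x hx => hx.le
      obtain ⟨y₀, hy₀⟩ := hφc.exists_forall_ge' a hev
      have hmax : IsLocalMax φ y₀ := Filter.Eventually.of_forall hy₀
      have hψ0 : ψ y₀ = 0 := hmax.hasDerivAt_eq_zero (hφ y₀)
      exact ⟨y₀, key y₀ hψ0 (by have := hy₀ a; intro h; rw [h] at this; linarith), hψ0⟩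
  -- uniqueness
  obtain ⟨y₀, hy₀⟩ := hex
  refine ⟨y₀, hy₀, fun y₁ hy₁ => ?_⟩
  by_contra hne
  set T : ℝ := y₀ - y₁ with hT
  have hTne : T ≠ 0 := sub_ne_zero.2 (Ne.symm hne)
  -- global bound on the trajectory
  obtain ⟨R, hR0, hR⟩ : ∃ R : ℝ, 0 ≤ R ∧ ∀ t, ‖(φ t, ψ t)‖ ≤ R := by
    have hF : Continuous fun t => (φ t, ψ t) := hφc.prodMk hψc
    have hFt : Tendsto (fun t => (φ t, ψ t)) (cocompact ℝ) (nhds ((0:ℝ), (0:ℝ))) :=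
      hcoφ.prodMk_nhds hcoψ
    have hnorm : Tendsto (fun t => ‖(φ t, ψ t)‖) (cocompact ℝ) (nhds 0) := by
      simpa using hFt.norm
    have hev := hnorm.eventually (eventually_le_nhds one_pos)
    obtain ⟨K, hKc, hKs⟩ := mem_cocompact.1 hev
    obtain ⟨C, hC⟩ := hKc.exists_bound_of_continuousOn hF.continuousOn
    refine ⟨max C 1, le_trans zero_le_one (le_max_right _ _), fun t => ?_⟩
    by_cases ht : t ∈ K
    · exact (hC t ht).trans (le_max_left _ _)
    · exact le_trans (hKs ht) (le_max_right _ _)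
  -- Lipschitz bound for the vector field on the ball of radius R
  set L : ℝ := max 1 ((|β + c| + |γ| * R) / α) with hLdef
  have hL1 : (1:ℝ) ≤ L := le_max_left _ _
  have hL2 : (|β + c| + |γ| * R) / α ≤ L := le_max_right _ _
  have hL0 : (0:ℝ) ≤ L := zero_le_one.trans hL1
  set v : ℝ → ℝ × ℝ → ℝ × ℝ := fun _ p => (p.2, ((β + c) * p.1 + γ / 2 * p.1 ^ 2) / α)
    with hvdef
  have hlip : ∀ t, LipschitzOnWith L.toNNReal (v t) (Metric.closedBall (0:ℝ×ℝ) R) := by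
    intro t
    apply LipschitzOnWith.of_dist_le_mul
    intro p hp q hq
    rw [Real.coe_toNNReal _ hL0]
    have hp1 : |p.1| ≤ R := by
      have h1 := mem_closedBall_zero_iff.1 hp
      have h2 := norm_fst_le p
      rw [Real.norm_eq_abs] at h2
      linarith
    have hq1 : |q.1| ≤ R := by
      have h1 := mem_closedBall_zero_iff.1 hq
      have h2 := norm_fst_le q
      rw [Real.norm_eq_abs] at h2
      linarith
    have hd1 : dist p.1 q.1 ≤ dist p q := by rw [Prod.dist_eq]; exact le_max_left _ _
    have hd2 : dist p.2 q.2 ≤ dist p q := by rw [Prod.dist_eq]; exact le_max_right _ _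
    have hdn : (0:ℝ) ≤ dist p q := dist_nonneg
    rw [show v t p = (p.2, ((β + c) * p.1 + γ / 2 * p.1 ^ 2) / α) from rfl,
      show v t q = (q.2, ((β + c) * q.1 + γ / 2 * q.1 ^ 2) / α) from rfl,
      Prod.dist_eq]
    apply max_le
    · nlinarith
    · have heq : ((β + c) * p.1 + γ / 2 * p.1 ^ 2) / α - ((β + c) * q.1 + γ / 2 * q.1 ^ 2) / α
          = ((β + c) + γ / 2 * (p.1 + q.1)) * (p.1 - q.1) / α := by
        field_simp; ring
      rw [Real.dist_eq, heq, abs_div, abs_mul, abs_of_pos hα]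
      have hb : |(β + c) + γ / 2 * (p.1 + q.1)| ≤ |β + c| + |γ| * R := by
        have h3 : |γ / 2 * (p.1 + q.1)| ≤ |γ| * R := by
          rw [abs_mul]
          have h4 : |p.1 + q.1| ≤ 2 * R := (abs_add_le _ _).trans (by linarith)
          have hg2 : |γ / 2| = |γ| / 2 := by rw [abs_div]; norm_num
          rw [hg2]
          nlinarith [abs_nonneg γ, abs_nonneg (p.1 + q.1)]
        calc |(β + c) + γ / 2 * (p.1 + q.1)| ≤ |β + c| + |γ / 2 * (p.1 + q.1)| := abs_add_le _ _
          _ ≤ |β + c| + |γ| * R := by linarith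
      rw [div_le_iff₀ hα]
      have hLα : |β + c| + |γ| * R ≤ L * α := (div_le_iff₀ hα).1 hL2
      have hd1' : |p.1 - q.1| = dist p.1 q.1 := (Real.dist_eq _ _).symm
      rw [hd1']
      nlinarith [abs_nonneg ((β + c) + γ / 2 * (p.1 + q.1)), dist_nonneg (x := p.1) (y := q.1),
        abs_nonneg (β + c), abs_nonneg γ]
  -- periodicity via uniqueness of ODE solutions
  have hper : ∀ t, φ (t + T) = φ t ∧ ψ (t + T) = ψ t := by
    intro t
    have hyT : y₁ + T = y₀ := by rw [hT]; ring
    set a : ℝ := min t y₁ - 1 with hadef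
    set b : ℝ := max t y₁ + 1 with hbdef
    have hmem : y₁ ∈ Set.Ioo a b :=
      ⟨by have := min_le_right t y₁; simp only [hadef]; linarith,
       by have := le_max_right t y₁; simp only [hbdef]; linarith⟩
    have hEq : Set.EqOn (fun u => (φ u, ψ u)) (fun u => (φ (u + T), ψ (u + T)))
        (Set.Icc a b) := by
      apply ODE_solution_unique_of_mem_Icc (v := v)
        (s := fun _ => Metric.closedBall (0:ℝ×ℝ) R) (fun t _ => hlip t) hmem
      · exact (hφc.prodMk hψc).continuousOn
      · exact fun u _ => (hφ u).prodMk (hψ u)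
      · exact fun u _ => mem_closedBall_zero_iff.2 (hR u)
      · exact ((hφc.comp (continuous_id.add continuous_const)).prodMk
          (hψc.comp (continuous_id.add continuous_const))).continuousOn
      · intro u _
        have h1 : HasDerivAt (fun x : ℝ => x + T) 1 u := (hasDerivAt_id u).add_const T
        have h2 := ((hφ (u + T)).prodMk (hψ (u + T))).scomp u h1
        simpa [Function.comp_def] using h2
      · exact fun u _ => mem_closedBall_zero_iff.2 (hR (u + T))
      · simp only [hyT]
        rw [hy₀.1, hy₀.2, hy₁.1, hy₁.2]
    have ht : t ∈ Set.Icc a b :=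
      ⟨by have := min_le_left t y₁; simp only [hadef]; linarith,
       by have := le_max_left t y₁; simp only [hbdef]; linarith⟩
    have := hEq ht
    simp only [Prod.mk.injEq] at this
    exact ⟨this.1.symm, this.2.symm⟩
  -- iterate the period and contradict decay at infinity
  have hfwd : ∀ n : ℕ, φ (y₀ + n * T) = -3 * (β + c) / γ := by
    intro n
    induction n with
    | zero => simpa using hy₀.1
    | succ n ih =>
      have h1 := (hper (y₀ + n * T)).1
      have h2 : y₀ + (n + 1 : ℕ) * T = y₀ + n * T + T := by push_cast; ring
      rw [h2, h1, ih]
  have hbwd : ∀ n : ℕ, φ (y₀ - n * T) = -3 * (β + c) / γ := by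
    intro n
    induction n with
    | zero => simpa using hy₀.1
    | succ n ih =>
      have h1 := (hper (y₀ - (n + 1 : ℕ) * T)).1
      have h2 : y₀ - (n + 1 : ℕ) * T + T = y₀ - n * T := by push_cast; ring
      rw [h2] at h1
      rw [← h1, ih]
  have habsper : ∀ n : ℕ, φ (y₀ + n * |T|) = -3 * (β + c) / γ := by
    intro n
    rcases abs_cases T with ⟨h1, _⟩ | ⟨h1, _⟩
    · rw [h1]; exact hfwd n
    · rw [h1]
      have : y₀ + n * -T = y₀ - n * T := by ring
      rw [this]; exact hbwd n
  have hTpos : 0 < |T| := abs_pos.2 hTne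
  have htends : Tendsto (fun n : ℕ => y₀ + n * |T|) atTop atTop :=
    tendsto_atTop_add_const_left _ y₀
      (Tendsto.atTop_mul_const hTpos tendsto_natCast_atTop_atTop)
  have hlim : Tendsto (fun n : ℕ => φ (y₀ + n * |T|)) atTop (nhds 0) := hφtop.comp htends
  rw [funext habsper] at hlim
  exact hm0 (tendsto_nhds_unique tendsto_const_nhds hlim)
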